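/- Let k ≥ 1, 0 ≤ ν ≤ k-1, Q(x) = ∑_{j=0}^{ν} C(k-1/2+j, j) x^j, R(x) = (1-x)^{k+1/2} Q(x), and g(x) = R(x)² + R(1-x)². Then g is decreasing on [0,1/2] and increasing on [1/2,1], with min_{[0,1]} g = g(1/2) = 2^{-2k-2ν}(∑_{j=0}^{ν} C(k+1/2+ν, j))² > 0 and max_{[0,1]} g = g(0) = g(1) = 1. -/

import Mathlib

open Finset Set

/-- The generalized binomial coefficient `C(t, j) = t(t-1)⋯(t-j+1)/j!` for real `t`. -/
noncomputable def gchoose (t : ℝ) (j : ℕ) : ℝ :=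
  (∏ i ∈ Finset.range j, (t - i)) / (j.factorial : ℝ)


lemma gchoose_zero (t : ℝ) : gchoose t 0 = 1 := by simp [gchoose]

lemma gchoose_pos {t : ℝ} {j : ℕ} (h : ∀ i : ℕ, i < j → 0 < t - i) : 0 < gchoose t j := by
  apply div_pos (Finset.prod_pos fun i hi => h i (Finset.mem_range.mp hi))
  exact_mod_cast j.factorial_pos

lemma gchoose_pascal (t : ℝ) (j : ℕ) :
    gchoose (t + 1) (j + 1) = gchoose t (j + 1) + gchoose t j := by
  unfold gchoose
  rw [Finset.prod_range_succ' (fun i => t + 1 - (i : ℕ)), Finset.prod_range_succ (fun i => t - i)]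
  have h1 : ∀ i : ℕ, t + 1 - ((i : ℕ) + 1 : ℕ) = t - i := by intro i; push_cast; ring
  simp only [h1, Nat.cast_zero, Nat.factorial_succ]
  have hf : (j.factorial : ℝ) ≠ 0 := by exact_mod_cast j.factorial_pos.ne'
  have hf1 : ((j+1 : ℕ) : ℝ) ≠ 0 := by positivity
  field_simp
  push_cast
  ring

lemma gchoose_rec (t : ℝ) (j : ℕ) :
    ((j : ℝ) + 1) * gchoose (t + j + 1) (j + 1) = (t + j + 1) * gchoose (t + j) j := by
  unfold gchoose
  rw [Finset.prod_range_succ' (fun i => t + (j:ℝ) + 1 - (i : ℕ))]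
  have h1 : ∀ i : ℕ, t + j + 1 - ((i : ℕ) + 1 : ℕ) = t + j - i := by intro i; push_cast; ring
  simp only [h1, Nat.cast_zero, Nat.factorial_succ]
  have hf : (j.factorial : ℝ) ≠ 0 := by exact_mod_cast j.factorial_pos.ne'
  have hf1 : ((j+1 : ℕ) : ℝ) ≠ 0 := by positivity
  push_cast
  field_simp
  ring

lemma gchoose_sum_half (t : ℝ) (n : ℕ) :
    (2:ℝ) ^ n * ∑ j ∈ range (n + 1), gchoose (t + j) j * (1/2) ^ j
      = ∑ j ∈ range (n + 1), gchoose (t + 1 + n) j := by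
  induction n with
  | zero => simp [gchoose]
  | succ n ih =>
    have key : ∑ j ∈ range (n + 2), gchoose (t + 1 + (n+1)) j
        = 2 * ∑ j ∈ range (n + 1), gchoose (t + 1 + n) j + gchoose (t + (n+1):ℝ) (n+1) := by
      have ht : (t + 1 + ((n:ℝ)+1)) = (t + 1 + n) + 1 := by ring
      have h5 : t + ((n:ℝ)+1) = t + 1 + n := by ring
      rw [ht, h5, Finset.sum_range_succ' (fun j => gchoose (t + 1 + n + 1) j)]
      simp only [gchoose_pascal (t + 1 + n)]
      rw [Finset.sum_add_distrib, gchoose_zero]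
      have h6 : ∑ j ∈ range (n+1), gchoose (t+1+n) (j+1) + 1
          = ∑ j ∈ range (n+1), gchoose (t+1+n) j + gchoose (t+1+n) (n+1) := by
        have ha : ∑ j ∈ range (n+2), gchoose (t+1+n) j
            = ∑ j ∈ range (n+1), gchoose (t+1+n) (j+1) + gchoose (t+1+n) 0 :=
          Finset.sum_range_succ' _ _
        have hb : ∑ j ∈ range (n+2), gchoose (t+1+n) j
            = ∑ j ∈ range (n+1), gchoose (t+1+n) j + gchoose (t+1+n) (n+1) :=
          Finset.sum_range_succ _ _
        rw [gchoose_zero] at ha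
        linarith
      linarith [h6]
    push_cast at key ⊢
    rw [key, ← ih]
    rw [Finset.sum_range_succ (fun j => gchoose (t + j) j * (1/2)^j)]
    have h2n : (2:ℝ)^(n+1) * (1/2:ℝ)^(n+1) = 1 := by
      rw [← mul_pow]; norm_num
    push_cast at h2n ⊢
    linear_combination (gchoose (t + ((n:ℝ)+1)) (n+1)) * h2n

/-- Properties of `R(x) = (1-x)^{k+1/2} Q(x)` and `g(x) = R(x)² + R(1-x)²` for the
dual pseudo-spline masks: monotonicity of `g` and its minimum and maximum on `[0,1]`. -/
theorem dual_pseudo_spline_extrema (k ν : ℕ) (hk : 1 ≤ k) (hν : ν ≤ k - 1)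
    (Q R g : ℝ → ℝ)
    (hQ : ∀ x : ℝ, Q x = ∑ j ∈ range (ν + 1), gchoose ((k:ℝ) - 1/2 + j) j * x ^ j)
    (hR : ∀ x : ℝ, R x = (1 - x) ^ ((k:ℝ) + 1/2) * Q x)
    (hg : ∀ x : ℝ, g x = R x ^ 2 + R (1 - x) ^ 2) :
    AntitoneOn g (Icc 0 (1/2)) ∧
    MonotoneOn g (Icc (1/2) 1) ∧
    (∀ x ∈ Icc (0:ℝ) 1, g (1/2) ≤ g x) ∧
    g (1/2) = (2:ℝ) ^ (-(2 * (k:ℤ)) - 2 * (ν:ℤ)) *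
        (∑ j ∈ range (ν + 1), gchoose ((k:ℝ) + 1/2 + ν) j) ^ 2 ∧
    0 < g (1/2) ∧
    (∀ x ∈ Icc (0:ℝ) 1, g x ≤ 1) ∧
    g 0 = 1 ∧ g 1 = 1 := by
  have hνk : ν + 1 ≤ k := by omega
  set c : ℕ → ℝ := fun j => gchoose ((k:ℝ) - 1/2 + j) j with hc
  set p : ℝ := (k:ℝ) + 1/2 with hp
  have hk1 : (1:ℝ) ≤ (k:ℝ) := by exact_mod_cast hk
  have hp1 : (1:ℝ) ≤ p := by rw [hp]; linarith
  have hcpos : ∀ j, 0 < c j := by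
    intro j
    apply gchoose_pos
    intro i hi
    have : (i:ℝ) < j := by exact_mod_cast hi
    linarith
  have hrec : ∀ j : ℕ, ((j:ℝ) + 1) * c (j + 1) = ((k:ℝ) + 1/2 + j) * c j := by
    intro j
    have := gchoose_rec ((k:ℝ) - 1/2) j
    have harg : (k:ℝ) - 1/2 + (j:ℝ) + 1 = (k:ℝ) - 1/2 + ((j:ℕ)+1 : ℕ) := by push_cast; ring
    rw [harg] at this
    rw [hc]
    simp only []
    rw [this]
    push_cast
    ring
  set K : ℝ := ((k:ℝ) + 1/2 + ν) * c ν with hK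
  have hKpos : 0 < K := by
    have := hcpos ν
    have : (0:ℝ) ≤ ν := Nat.cast_nonneg ν
    positivity
  -- continuity
  have hQc : Continuous Q := by
    have : Q = fun x => ∑ j ∈ range (ν + 1), c j * x ^ j := funext hQ
    rw [this]
    exact continuous_finset_sum _ fun j _ => continuous_const.mul (continuous_pow j)
  have hRc : Continuous R := by
    have : R = fun x => (1 - x) ^ p * Q x := funext hR
    rw [this]
    apply Continuous.mul _ hQc
    apply Continuous.rpow_const (continuous_const.sub continuous_id)
    intro x; right; linarith
  have hgc : Continuous g := by
    have : g = fun x => R x ^ 2 + R (1 - x) ^ 2 := funext hg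
    rw [this]
    exact ((hRc.pow 2).add ((hRc.comp (continuous_const.sub continuous_id)).pow 2))
  -- derivative of Q
  have hQd : ∀ x : ℝ, HasDerivAt Q (∑ j ∈ range (ν + 1), c j * (j * x ^ (j - 1))) x := by
    intro x
    have : HasDerivAt (fun y => ∑ j ∈ range (ν + 1), c j * y ^ j)
        (∑ j ∈ range (ν + 1), c j * (j * x ^ (j - 1))) x :=
      HasDerivAt.fun_sum fun j _ => (hasDerivAt_pow j x).const_mul (c j)
    have hQe : Q = fun x => ∑ j ∈ range (ν + 1), c j * x ^ j := funext hQ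
    rw [hQe]
    exact this
  -- key polynomial identity
  have hident : ∀ x : ℝ,
      (1 - x) * (∑ j ∈ range (ν + 1), c j * (j * x ^ (j - 1))) - p * Q x = -K * x ^ ν := by
    intro x
    have hterm : ∀ j : ℕ, (1 - x) * (c j * (j * x ^ (j - 1))) - p * (c j * x ^ j)
        = ((j:ℝ) * c j * x ^ (j - 1)) - (((j:ℝ)+1) * c (j + 1) * x ^ ((j+1) - 1)) := by
      intro j
      cases j with
      | zero =>
        simp only [Nat.cast_zero, pow_zero, Nat.zero_sub, Nat.add_sub_cancel]
        have := hrec 0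
        push_cast at this
        rw [hp]
        nlinarith [this]
      | succ m =>
        have hr := hrec (m + 1)
        have h1 : (m + 1) - 1 = m := by omega
        have h2 : (m + 1 + 1) - 1 = m + 1 := by omega
        rw [h1, h2, hr]
        have hxp : x ^ (m + 1) = x ^ m * x := pow_succ x m
        push_cast
        rw [hxp]
        ring
    calc (1 - x) * (∑ j ∈ range (ν + 1), c j * (j * x ^ (j - 1))) - p * Q x
        = ∑ j ∈ range (ν + 1), ((1 - x) * (c j * (j * x ^ (j - 1))) - p * (c j * x ^ j)) := by
          rw [hQ x, Finset.mul_sum, Finset.mul_sum, ← Finset.sum_sub_distrib]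
      _ = ∑ j ∈ range (ν + 1), (((j:ℝ) * c j * x ^ (j - 1)) -
            (((j:ℝ)+1) * c (j + 1) * x ^ ((j+1) - 1))) := by
          exact Finset.sum_congr rfl fun j _ => hterm j
      _ = ((0:ℕ):ℝ) * c 0 * x ^ (0 - 1) - ((ν:ℝ)+1) * c (ν + 1) * x ^ ((ν+1) - 1) := by
          have := Finset.sum_range_sub' (fun j => (j:ℝ) * c j * x ^ (j - 1)) (ν + 1)
          simp only [Nat.cast_add, Nat.cast_one] at this ⊢
          exact this
      _ = -K * x ^ ν := by
          simp only [Nat.cast_zero, zero_mul, Nat.add_sub_cancel, zero_sub, hK]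
          rw [hrec ν]
          ring
  -- derivative of R
  have hRd : ∀ x : ℝ, x < 1 →
      HasDerivAt R (-K * ((1 - x) ^ ((k:ℝ) - 1/2) * x ^ ν)) x := by
    intro x hx
    have hpos : (0:ℝ) < 1 - x := by linarith
    have h1 : HasDerivAt (fun y : ℝ => 1 - y) (-1) x := by
      simpa using (hasDerivAt_id x).const_sub 1
    have h2 : HasDerivAt (fun y : ℝ => (1 - y) ^ p) ((-1) * p * (1 - x) ^ (p - 1)) x :=
      h1.rpow_const (Or.inr hp1)
    have h3 := h2.mul (hQd x)
    have hRe : R = fun y => (1 - y) ^ p * Q y := funext hR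
    rw [hRe]
    refine h3.congr_deriv ?_
    symm
    have hsplit : (1 - x) ^ p = (1 - x) ^ (p - 1) * (1 - x) := by
      nth_rewrite 1 [show p = (p - 1) + 1 by ring]
      rw [Real.rpow_add hpos, Real.rpow_one]
    rw [hsplit]
    have hpk : (k:ℝ) - 1/2 = p - 1 := by rw [hp]; ring
    rw [hpk]
    have hid := hident x
    set A := (1 - x) ^ (p - 1) with hA
    set Sx := ∑ j ∈ range (ν + 1), c j * (↑j * x ^ (j - 1)) with hSx
    linear_combination (-A) * hid
  -- nonnegativity
  have hQnn : ∀ x : ℝ, 0 ≤ x → 0 ≤ Q x := by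
    intro x hx
    rw [hQ]
    exact Finset.sum_nonneg fun j _ => mul_nonneg (hcpos j).le (pow_nonneg hx j)
  have hRnn : ∀ x ∈ Icc (0:ℝ) 1, 0 ≤ R x := by
    intro x hx
    rw [hR]
    exact mul_nonneg (Real.rpow_nonneg (by linarith [hx.2]) p) (hQnn x hx.1)
  -- R antitone on [0,1]
  have hRanti : AntitoneOn R (Icc 0 1) := by
    apply antitoneOn_of_deriv_nonpos (convex_Icc 0 1) hRc.continuousOn
    · intro x hx
      rw [interior_Icc] at hx
      exact (hRd x hx.2).differentiableAt.differentiableWithinAt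
    · intro x hx
      rw [interior_Icc] at hx
      rw [(hRd x hx.2).deriv]
      have h1 : (0:ℝ) ≤ (1 - x) ^ ((k:ℝ) - 1/2) := Real.rpow_nonneg (by linarith [hx.2]) _
      have h2 : (0:ℝ) ≤ x ^ ν := pow_nonneg hx.1.le ν
      exact mul_nonpos_of_nonpos_of_nonneg (by linarith) (mul_nonneg h1 h2)
  -- key pointwise inequality
  have hAineq : ∀ x : ℝ, 0 < x → x ≤ 1/2 →
      x ^ ((k:ℝ) - 1/2) * (1 - x) ^ ν ≤ (1 - x) ^ ((k:ℝ) - 1/2) * x ^ ν := by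
    intro x hx0 hx2
    have hb : (0:ℝ) < 1 - x := by linarith
    have hab : x ≤ 1 - x := by linarith
    have hq : (ν:ℝ) + 1 ≤ (k:ℝ) := by exact_mod_cast hνk
    have e1 : x ^ ((k:ℝ) - 1/2) = x ^ ((k:ℝ) - 1/2 - ν) * x ^ ν := by
      rw [← Real.rpow_natCast x ν, ← Real.rpow_add hx0]
      congr 1; ring
    have e2 : (1-x) ^ ((k:ℝ) - 1/2) = (1-x) ^ ((k:ℝ) - 1/2 - ν) * (1-x) ^ ν := by
      rw [← Real.rpow_natCast (1-x) ν, ← Real.rpow_add hb]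
      congr 1; ring
    rw [e1, e2]
    have h3 : x ^ ((k:ℝ) - 1/2 - ν) ≤ (1-x) ^ ((k:ℝ) - 1/2 - ν) :=
      Real.rpow_le_rpow hx0.le hab (by linarith)
    have h4 : (0:ℝ) ≤ x ^ ν := pow_nonneg hx0.le ν
    have h5 : (0:ℝ) ≤ (1-x) ^ ν := pow_nonneg hb.le ν
    calc x ^ ((k:ℝ) - 1/2 - ν) * x ^ ν * (1-x) ^ ν
        ≤ (1-x) ^ ((k:ℝ) - 1/2 - ν) * x ^ ν * (1-x) ^ ν :=
          mul_le_mul_of_nonneg_right (mul_le_mul_of_nonneg_right h3 h4) h5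
      _ = (1-x) ^ ((k:ℝ) - 1/2 - ν) * (1-x) ^ ν * x ^ ν := by ring
  -- derivative of g
  have hgd : ∀ x : ℝ, 0 < x → x < 1 → HasDerivAt g
      ((2:ℝ) * R x ^ 1 * (-K * ((1-x) ^ ((k:ℝ)-1/2) * x ^ ν)) +
       (2:ℝ) * R (1-x) ^ 1 * ((-K * ((1-(1-x)) ^ ((k:ℝ)-1/2) * (1-x) ^ ν)) * (-1))) x := by
    intro x hx0 hx1
    have h1 : HasDerivAt (fun y : ℝ => 1 - y) (-1) x := by
      simpa using (hasDerivAt_id x).const_sub 1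
    have hcomp : HasDerivAt (fun y : ℝ => R (1 - y))
        ((-K * ((1-(1-x)) ^ ((k:ℝ)-1/2) * (1-x) ^ ν)) * (-1)) x :=
      (hRd (1-x) (by linarith)).comp x h1
    have hd1 := (hRd x hx1).pow 2
    have hd2 := hcomp.pow 2
    have hge : g = fun y => R y ^ 2 + R (1-y) ^ 2 := funext hg
    rw [hge]
    have h := hd1.add hd2
    simp at h ⊢
    exact h
  -- g antitone on [0, 1/2]
  have hganti : AntitoneOn g (Icc 0 (1/2)) := by
    apply antitoneOn_of_deriv_nonpos (convex_Icc 0 (1/2)) hgc.continuousOn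
    · intro x hx
      rw [interior_Icc] at hx
      exact (hgd x hx.1 (by linarith [hx.2])).differentiableAt.differentiableWithinAt
    · intro x hx
      rw [interior_Icc] at hx
      obtain ⟨hx0, hx2⟩ := hx
      rw [(hgd x hx0 (by linarith)).deriv]
      have h11 : (1:ℝ) - (1-x) = x := by ring
      rw [h11]
      have hxm : x ∈ Icc (0:ℝ) 1 := ⟨hx0.le, by linarith⟩
      have hxm' : (1-x) ∈ Icc (0:ℝ) 1 := ⟨by linarith, by linarith⟩
      have hRle : R (1-x) ≤ R x := hRanti hxm hxm' (by linarith)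
      have hRnn' : 0 ≤ R (1-x) := hRnn _ hxm'
      have hRnnx : 0 ≤ R x := hRnn _ hxm
      have hA := hAineq x hx0 hx2.le
      have hAnn : 0 ≤ x ^ ((k:ℝ)-1/2) * (1-x) ^ ν :=
        mul_nonneg (Real.rpow_nonneg hx0.le _) (pow_nonneg (by linarith) ν)
      have key : R (1-x) * (x ^ ((k:ℝ)-1/2) * (1-x) ^ ν) ≤ R x * ((1-x) ^ ((k:ℝ)-1/2) * x ^ ν) :=
        mul_le_mul hRle hA hAnn hRnnx
      have hfin := mul_nonneg hKpos.le (sub_nonneg.mpr key)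
      simp only [pow_one]
      nlinarith [hfin]
  -- symmetry
  have hsym : ∀ x : ℝ, g (1-x) = g x := by
    intro x
    rw [hg, hg]
    have h11 : (1:ℝ) - (1-x) = x := by ring
    rw [h11]; ring
  have hgmono : MonotoneOn g (Icc (1/2) 1) := by
    intro a ha b hb hab
    have ha' : 1 - a ∈ Icc (0:ℝ) (1/2) := ⟨by linarith [ha.2], by linarith [ha.1]⟩
    have hb' : 1 - b ∈ Icc (0:ℝ) (1/2) := ⟨by linarith [hb.2], by linarith [hb.1]⟩
    have := hganti hb' ha' (by linarith)
    rwa [hsym, hsym] at this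
  -- endpoint values
  have hQ0 : Q 0 = 1 := by
    rw [hQ]
    rw [Finset.sum_eq_single_of_mem 0 (Finset.mem_range.mpr (Nat.succ_pos ν))]
    · norm_num [gchoose_zero]
    · intro j _ hj
      simp [zero_pow hj]
  have hR0 : R 0 = 1 := by
    rw [hR, hQ0]
    norm_num
  have hR1 : R 1 = 0 := by
    rw [hR, sub_self, Real.zero_rpow (by positivity : p ≠ 0), zero_mul]
  have hg0 : g 0 = 1 := by
    rw [hg, sub_zero, hR0, hR1]; norm_num
  have hg1 : g 1 = 1 := by
    rw [hg, sub_self, hR1, hR0]; norm_num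
  -- value at 1/2
  set S : ℝ := ∑ j ∈ range (ν+1), gchoose ((k:ℝ) + 1/2 + ν) j with hS
  have hSpos : 0 < S := by
    rw [hS]
    apply Finset.sum_pos
    · intro j hj
      apply gchoose_pos
      intro i hi
      have hij : i < ν + 1 := lt_trans hi (Finset.mem_range.mp hj)
      have : (i:ℝ) ≤ ν := by exact_mod_cast Nat.lt_succ_iff.mp hij
      linarith
    · exact ⟨0, Finset.mem_range.mpr (Nat.succ_pos ν)⟩
  have hQhalf : (2:ℝ)^ν * Q (1/2) = S := by
    rw [hQ, hS]
    have harg : (k:ℝ) + 1/2 + ν = (k:ℝ) - 1/2 + 1 + ν := by ring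
    rw [harg]
    exact gchoose_sum_half ((k:ℝ) - 1/2) ν
  have hQh2 : Q (1/2) = S / 2^ν := by
    rw [eq_div_iff (by positivity : ((2:ℝ)^ν) ≠ 0)]
    linarith [hQhalf]
  have hRhalf : R (1/2) = (1/2:ℝ) ^ p * (S / 2^ν) := by
    rw [hR, hQh2]
    norm_num
  have hpp : ((1/2:ℝ) ^ p) ^ 2 = (1/2:ℝ) ^ (2*k+1 : ℕ) := by
    rw [sq, ← Real.rpow_add (by norm_num : (0:ℝ) < 1/2)]
    have h2p : p + p = ((2*k+1 : ℕ) : ℝ) := by rw [hp]; push_cast; ring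
    rw [h2p, Real.rpow_natCast]
  have hghalf : g (1/2) = 2 * R (1/2) ^ 2 := by
    rw [hg]; norm_num; ring
  have hgval : g (1/2) = (2:ℝ) ^ (-(2 * (k:ℤ)) - 2 * (ν:ℤ)) * S ^ 2 := by
    rw [hghalf, hRhalf, mul_pow, hpp]
    rw [show (-(2 * (k:ℤ)) - 2 * (ν:ℤ)) = -((2*k+2*ν : ℕ) : ℤ) by push_cast; ring]
    rw [zpow_neg, zpow_natCast]
    have h2 : ((2:ℝ) ^ (2*k+2*ν)) ≠ 0 := by positivity
    have h3 : ((2:ℝ) ^ ν) ≠ 0 := by positivity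
    field_simp
    ring_nf
    rw [← mul_pow]
    norm_num
  refine ⟨hganti, hgmono, ?_, hgval, ?_, ?_, hg0, hg1⟩
  · intro x hx
    rcases le_total x (1/2) with h | h
    · exact hganti ⟨hx.1, h⟩ ⟨by norm_num, le_refl _⟩ h
    · exact hgmono ⟨le_refl _, by norm_num⟩ ⟨h, hx.2⟩ h
  · rw [hgval]
    positivity
  · intro x hx
    rcases le_total x (1/2) with h | h
    · have := hganti ⟨le_refl _, by norm_num⟩ ⟨hx.1, h⟩ hx.1
      rw [hg0] at this
      exact this
    · have := hgmono ⟨h, hx.2⟩ ⟨by norm_num, le_refl _⟩ hx.2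
      rw [hg1] at this
      exact this
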